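/- Let X ⊂ ℝ^n be finite with conv(X) k-dimensional and x in its relative interior. Let k' be the largest dimension of a simplex with vertices in X having x in its relative interior. Then there exists Y ⊆ X with |Y| ≤ 2k − k' + 1 such that conv(Y) is k-dimensional and x lies in the relative interior of conv(Y). -/

import Mathlib

open Finset Module Submodule

variable {E : Type*} [DecidableEq E] [NormedAddCommGroup E] [NormedSpace ℝ E] [FiniteDimensional ℝ E]

lemma spanS (s : Set E) (x : E) (hx : x ∈ affineSpan ℝ s) :
    Submodule.span ℝ ((fun y => y - x) '' s) = vectorSpan ℝ s := by
  apply le_antisymm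
  · rw [Submodule.span_le]
    rintro - ⟨y, hy, rfl⟩
    rw [← direction_affineSpan ℝ s]
    have := AffineSubspace.vsub_mem_direction (subset_affineSpan ℝ s hy) hx
    rwa [vsub_eq_sub] at this
  · rw [vectorSpan_def, Submodule.span_le]
    rintro - ⟨y, hy, y', hy', rfl⟩
    have h1 : y - x ∈ Submodule.span ℝ ((fun y => y - x) '' s) :=
      Submodule.subset_span ⟨y, hy, rfl⟩
    have h2 : y' - x ∈ Submodule.span ℝ ((fun y => y - x) '' s) :=
      Submodule.subset_span ⟨y', hy', rfl⟩
    have : y -ᵥ y' = (y - x) - (y' - x) := by rw [vsub_eq_sub]; abel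
    show y -ᵥ y' ∈ _
    rw [this]
    exact sub_mem h1 h2

lemma memAffineSpan_of_mem_convexHull {s : Set E} {x : E} (hx : x ∈ convexHull ℝ s) :
    x ∈ affineSpan ℝ s := by
  have := subset_affineSpan ℝ (convexHull ℝ s) hx
  rwa [affineSpan_convexHull] at this

lemma pos_combo_of_mem_intrinsicInterior (Y : Finset E) (x : E)
    (hx : x ∈ intrinsicInterior ℝ (convexHull ℝ (Y : Set E))) :
    ∃ b : E → ℝ, (∀ y ∈ Y, 0 < b y) ∧ ∑ y ∈ Y, b y = 1 ∧ ∑ y ∈ Y, b y • y = x := by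
  classical
  have hxc : x ∈ convexHull ℝ (Y : Set E) := intrinsicInterior_subset hx
  have hYne : Y.Nonempty := by
    rcases Y.eq_empty_or_nonempty with h | h
    · simp [h] at hxc
    · exact h
  have hcard : (0:ℝ) < (Y.card : ℝ) := by exact_mod_cast (Finset.card_pos.2 hYne)
  set c : E := ∑ y ∈ Y, ((Y.card : ℝ))⁻¹ • y with hc
  have hsum_inv : ∑ _y ∈ Y, ((Y.card : ℝ))⁻¹ = 1 := by
    rw [Finset.sum_const, nsmul_eq_mul, mul_inv_cancel₀ (ne_of_gt hcard)]
  have hcc : c ∈ convexHull ℝ (Y : Set E) := by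
    rw [hc]
    exact Convex.sum_mem (convex_convexHull ℝ _) (fun y _ => by positivity)
      hsum_inv (fun y hy => subset_convexHull ℝ _ hy)
  have hxA : x ∈ affineSpan ℝ (convexHull ℝ (Y : Set E)) := subset_affineSpan ℝ _ hxc
  have hcA : c ∈ affineSpan ℝ (convexHull ℝ (Y : Set E)) := subset_affineSpan ℝ _ hcc
  -- the path t ↦ x + t • (x - c) inside the affine span
  set A := affineSpan ℝ (convexHull ℝ (Y : Set E)) with hA
  have hmem : ∀ t : ℝ, t • (x - c) + x ∈ A := by
    intro t
    have := A.smul_vsub_vadd_mem t hxA hcA hxA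
    rwa [vsub_eq_sub, vadd_eq_add] at this
  obtain ⟨p, hp, hpx⟩ := mem_intrinsicInterior.1 hx
  set γ : ℝ → A := fun t => ⟨t • (x - c) + x, hmem t⟩ with hγdef
  have hγcont : Continuous γ := by
    apply Continuous.subtype_mk
    exact (continuous_id.smul continuous_const).add continuous_const
  have hγ0 : γ 0 = p := by
    apply Subtype.ext
    simp [hγdef, hpx]
  have hopen : IsOpen (γ ⁻¹' interior (Subtype.val ⁻¹' (convexHull ℝ (Y : Set E)) : Set A)) :=
    hγcont.isOpen_preimage _ isOpen_interior
  have h0mem : (0:ℝ) ∈ γ ⁻¹' interior (Subtype.val ⁻¹' (convexHull ℝ (Y : Set E)) : Set A) := by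
    simp only [Set.mem_preimage, hγ0]
    exact hp
  obtain ⟨ε, hε, hball⟩ := Metric.isOpen_iff.1 hopen 0 h0mem
  have htmem : (ε/2 : ℝ) ∈ Metric.ball (0:ℝ) ε := by
    rw [Metric.mem_ball, Real.dist_eq, sub_zero, abs_of_nonneg (by linarith : (0:ℝ) ≤ ε/2)]
    linarith
  have hz : (ε/2) • (x - c) + x ∈ convexHull ℝ (Y : Set E) := by
    have h1 := interior_subset (hball htmem)
    exact h1
  set t : ℝ := ε/2 with ht
  have htpos : 0 < t := by positivity
  -- z = x + t(x-c) is a convex combination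
  rw [Finset.convexHull_eq] at hz
  obtain ⟨u, hu0, hu1, huz⟩ := hz
  rw [Finset.centerMass_eq_of_sum_1 _ _ hu1] at huz
  simp only [id] at huz
  refine ⟨fun y => (u y + t * ((Y.card : ℝ))⁻¹) / (1 + t), ?_, ?_, ?_⟩
  · intro y hy
    have := hu0 y hy
    positivity
  · rw [← Finset.sum_div]
    rw [Finset.sum_add_distrib, hu1, ← Finset.mul_sum, hsum_inv, mul_one]
    field_simp
  · have : ∑ y ∈ Y, ((u y + t * ((Y.card : ℝ))⁻¹) / (1 + t)) • y
        = (1 + t)⁻¹ • ∑ y ∈ Y, (u y + t * ((Y.card : ℝ))⁻¹) • y := by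
      rw [Finset.smul_sum]
      refine Finset.sum_congr rfl fun y _ => ?_
      rw [div_eq_inv_mul, mul_smul]
    rw [this]
    have hexp : ∑ y ∈ Y, (u y + t * ((Y.card : ℝ))⁻¹) • y
        = (t • (x - c) + x) + t • c := by
      rw [Finset.sum_congr rfl (fun y _ => add_smul (u y) (t * ((Y.card : ℝ))⁻¹) y)]
      rw [Finset.sum_add_distrib, huz]
      congr 1
      rw [hc, Finset.smul_sum]
      exact Finset.sum_congr rfl fun y _ => (mul_smul _ _ _)
    rw [hexp]
    have : (t • (x - c) + x) + t • c = (1 + t) • x := by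
      rw [smul_sub, add_smul, one_smul]; abel
    rw [this, smul_smul, inv_mul_cancel₀ (by positivity), one_smul]

lemma mem_intrinsicInterior_of_pos_combo (Y : Finset E) (x : E) (b : E → ℝ)
    (hb : ∀ y ∈ Y, 0 < b y) (h1 : ∑ y ∈ Y, b y = 1) (hx : ∑ y ∈ Y, b y • y = x) :
    x ∈ intrinsicInterior ℝ (convexHull ℝ (Y : Set E)) := by
  classical
  have hxc : x ∈ convexHull ℝ (Y : Set E) := by
    rw [← hx]
    exact Convex.sum_mem (convex_convexHull ℝ _) (fun y hy => (hb y hy).le) h1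
      (fun y hy => subset_convexHull ℝ _ hy)
  have hxA : x ∈ affineSpan ℝ (convexHull ℝ (Y : Set E)) := subset_affineSpan ℝ _ hxc
  set A := affineSpan ℝ (convexHull ℝ (Y : Set E)) with hA
  -- the linear map F : (Y → ℝ) → E
  set F : (↥Y → ℝ) →ₗ[ℝ] E :=
    { toFun := fun v => ∑ i : ↥Y, v i • ((i : E) - x)
      map_add' := by
        intro v w
        simp only [Pi.add_apply, add_smul]
        rw [Finset.sum_add_distrib]
      map_smul' := by
        intro r v
        simp only [Pi.smul_apply, smul_eq_mul, RingHom.id_apply, Finset.smul_sum, mul_smul] } with hF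
  have hFapply : ∀ v : ↥Y → ℝ, F v = ∑ i : ↥Y, v i • ((i : E) - x) := fun _ => rfl
  have hsingle : ∀ i : ↥Y, F (Pi.single i 1) = (i : E) - x := by
    intro i
    rw [hFapply]
    rw [Finset.sum_eq_single i]
    · simp
    · intro j _ hj
      simp [Pi.single_apply, hj]
    · simp
  have hDle : A.direction ≤ LinearMap.range F := by
    rw [hA, affineSpan_convexHull, direction_affineSpan, vectorSpan_def, Submodule.span_le]
    rintro - ⟨y, hy, y', hy', rfl⟩
    show y -ᵥ y' ∈ _
    have : y -ᵥ y' = ((y : E) - x) - ((y' : E) - x) := by rw [vsub_eq_sub]; abel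
    rw [this]
    exact sub_mem ⟨Pi.single ⟨y, hy⟩ 1, hsingle ⟨y, hy⟩⟩ ⟨Pi.single ⟨y', hy'⟩ 1, hsingle ⟨y', hy'⟩⟩
  obtain ⟨G₀, hG₀⟩ := F.rangeRestrict.exists_rightInverse_of_surjective
    (by rw [LinearMap.range_eq_top]; exact F.surjective_rangeRestrict)
  set G : ↥A.direction →ₗ[ℝ] (↥Y → ℝ) := G₀ ∘ₗ Submodule.inclusion hDle with hG
  have hFG : ∀ d : ↥A.direction, F (G d) = (d : E) := by
    intro d
    have := congrArg (fun h => (h (Submodule.inclusion hDle d) : E)) hG₀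
    simpa [hG] using this
  -- the inverse-coordinates map φ
  set w₀ : ↥Y → ℝ := fun i => b (i : E) with hw₀
  have hw₀sum : ∑ i : ↥Y, w₀ i = 1 := by
    rw [hw₀, Finset.sum_coe_sort Y b]; exact h1
  have hFw₀ : F w₀ = 0 := by
    rw [hFapply]
    have : ∑ i : ↥Y, w₀ i • ((i : E) - x) = ∑ y ∈ Y, b y • (y - x) :=
      Finset.sum_coe_sort Y (fun y => b y • (y - x))
    rw [this]
    have : ∑ y ∈ Y, b y • (y - x) = (∑ y ∈ Y, b y • y) - (∑ y ∈ Y, b y) • x := by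
      rw [Finset.sum_smul, ← Finset.sum_sub_distrib]
      exact Finset.sum_congr rfl fun y _ => smul_sub _ _ _
    rw [this, hx, h1, one_smul, sub_self]
  have hdmem : ∀ z : ↥A, (z : E) - x ∈ A.direction := by
    intro z
    have := AffineSubspace.vsub_mem_direction z.2 hxA
    rwa [vsub_eq_sub] at this
  set dz : ↥A → ↥A.direction := fun z => ⟨(z : E) - x, hdmem z⟩ with hdz
  set φ : ↥A → (↥Y → ℝ) := fun z => w₀ + G (dz z) - (∑ i : ↥Y, G (dz z) i) • w₀ with hφ
  have hφcont : Continuous φ := by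
    have hdzc : Continuous dz := by
      apply Continuous.subtype_mk
      exact continuous_subtype_val.sub continuous_const
    have hGc : Continuous G := G.continuous_of_finiteDimensional
    have hGdz : Continuous fun z => G (dz z) := hGc.comp hdzc
    apply Continuous.sub
    · exact continuous_const.add hGdz
    · apply Continuous.smul (f := fun z => ∑ i : ↥Y, G (dz z) i) (g := fun _ => w₀) _ continuous_const
      exact continuous_finset_sum _ fun i _ => (continuous_apply i).comp hGdz
  set O : Set ↥A := φ ⁻¹' {v | ∀ i, 0 < v i} with hO
  have hOopen : IsOpen O := by
    apply hφcont.isOpen_preimage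
    have : {v : ↥Y → ℝ | ∀ i, 0 < v i} = ⋂ i, {v | 0 < v i} := by
      ext v; simp
    rw [this]
    exact isOpen_iInter_of_finite fun i => isOpen_lt continuous_const (continuous_apply i)
  have hxO : (⟨x, hxA⟩ : ↥A) ∈ O := by
    have hdz0 : dz ⟨x, hxA⟩ = 0 := by
      apply Subtype.ext; simp [hdz]
    intro i
    simp only [hφ, hdz0, map_zero]
    simpa using hb (i : E) i.2
  have hOsub : O ⊆ Subtype.val ⁻¹' (convexHull ℝ (Y : Set E)) := by
    intro z hz
    set v := φ z with hv
    have hvpos : ∀ i, 0 < v i := hz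
    have hσ : ∑ i : ↥Y, G (dz z) i = ∑ i : ↥Y, G (dz z) i := rfl
    have hvsum : ∑ i : ↥Y, v i = 1 := by
      simp only [hv, hφ, Pi.sub_apply, Pi.add_apply, Pi.smul_apply, smul_eq_mul]
      rw [Finset.sum_sub_distrib, Finset.sum_add_distrib, hw₀sum, ← Finset.mul_sum, hw₀sum]
      ring
    have hFv : F v = (z : E) - x := by
      simp only [hv, hφ]
      rw [map_sub, map_add, map_smul, hFw₀, hFG]
      simp [hdz]
    have hzval : ∑ i : ↥Y, v i • (i : E) = (z : E) := by
      have hexp : ∑ i : ↥Y, v i • ((i : E) - x)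
          = ∑ i : ↥Y, v i • (i : E) - (∑ i : ↥Y, v i) • x := by
        rw [Finset.sum_smul, ← Finset.sum_sub_distrib]
        exact Finset.sum_congr rfl fun i _ => smul_sub _ _ _
      have := hFv
      rw [hFapply, hexp, hvsum, one_smul, sub_eq_sub_iff_add_eq_add] at this
      linear_combination (norm := module) this
    rw [Set.mem_preimage, ← hzval]
    exact Convex.sum_mem (convex_convexHull ℝ _) (fun i _ => (hvpos i).le) hvsum
      (fun i _ => subset_convexHull ℝ _ i.2)
  exact mem_intrinsicInterior.2 ⟨⟨x, hxA⟩, interior_maximal hOsub hOopen hxO, rfl⟩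

set_option maxHeartbeats 1000000 in
lemma step_lemma (X Y : Finset E) (x : E) (hYX : Y ⊆ X)
    (c : E → ℝ) (hc : ∀ y ∈ X, 0 < c y) (hc1 : ∑ y ∈ X, c y = 1)
    (hc0 : ∑ y ∈ X, c y • (y - x) = 0)
    (b : E → ℝ) (hb : ∀ y ∈ Y, 0 < b y) (hb1 : ∑ y ∈ Y, b y = 1)
    (hb0 : ∑ y ∈ Y, b y • (y - x) = 0)
    (hne : Submodule.span ℝ ((fun y => y - x) '' (Y : Set E))
        ≠ Submodule.span ℝ ((fun y => y - x) '' (X : Set E))) :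
    ∃ T : Finset E, T ⊆ X ∧ Disjoint Y T ∧ 2 ≤ T.card ∧
      (∃ a : E → ℝ, (∀ y ∈ Y ∪ T, 0 < a y) ∧ (∑ y ∈ Y ∪ T, a y = 1) ∧
        ∑ y ∈ Y ∪ T, a y • (y - x) = 0) ∧
      finrank ℝ (Submodule.span ℝ ((fun y => y - x) '' (Y : Set E))) + (T.card - 1)
        ≤ finrank ℝ (Submodule.span ℝ ((fun y => y - x) '' ((Y ∪ T : Finset E) : Set E))) := by
  classical
  set U : Submodule ℝ E := Submodule.span ℝ ((fun y => y - x) '' (Y : Set E)) with hU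
  set π : E →ₗ[ℝ] E ⧸ U := U.mkQ with hπ
  set q : E → E ⧸ U := fun y => π (y - x) with hq
  set Z : Finset E := X.filter (fun y => (y - x) ∉ U) with hZ
  have hZX : Z ⊆ X := Finset.filter_subset _ _
  have hYU : ∀ y ∈ Y, y - x ∈ U := fun y hy => subset_span ⟨y, hy, rfl⟩
  have hZq : ∀ y ∈ Z, q y ≠ 0 := by
    intro y hy h0
    have : y - x ∈ U := (Submodule.Quotient.mk_eq_zero U).1 h0
    exact (Finset.mem_filter.1 hy).2 this
  have hZne : Z.Nonempty := by
    rw [Finset.nonempty_iff_ne_empty]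
    intro h
    apply hne
    apply le_antisymm
    · exact Submodule.span_mono (Set.image_mono (by exact_mod_cast hYX))
    · rw [Submodule.span_le]
      rintro - ⟨y, hy, rfl⟩
      by_contra hyu
      have : y ∈ Z := Finset.mem_filter.2 ⟨hy, hyu⟩
      simp [h] at this
  -- the projected convex combination
  have hπ0 : ∑ y ∈ X, c y • q y = 0 := by
    have := congrArg π hc0
    rw [map_sum, map_zero] at this
    simpa only [map_smul] using this
  have hZ0 : ∑ y ∈ Z, c y • q y = 0 := by
    rw [← Finset.sum_filter_add_sum_filter_not X (fun y => (y - x) ∉ U) (fun y => c y • q y)]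
      at hπ0
    have hz : ∑ y ∈ X.filter (fun y => ¬ (y - x) ∉ U), c y • q y = 0 := by
      apply Finset.sum_eq_zero
      intro y hy
      have : y - x ∈ U := by
        have := (Finset.mem_filter.1 hy).2
        simpa using this
      have : q y = 0 := (Submodule.Quotient.mk_eq_zero U).2 this
      rw [this, smul_zero]
    rw [hz, add_zero] at hπ0
    exact hπ0
  set σ : ℝ := ∑ y ∈ Z, c y with hσ
  have hσpos : 0 < σ := Finset.sum_pos (fun y hy => hc y (hZX hy)) hZne
  have hmem0 : (0 : E ⧸ U) ∈ convexHull ℝ (q '' (Z : Set E)) := by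
    have hcm : Z.centerMass (fun y => c y / σ) q = 0 := by
      rw [Finset.centerMass_eq_of_sum_1 _ _ (by rw [← Finset.sum_div, hσ, div_self (ne_of_gt hσpos)])]
      have : ∑ y ∈ Z, (c y / σ) • q y = σ⁻¹ • ∑ y ∈ Z, c y • q y := by
        rw [Finset.smul_sum]
        exact Finset.sum_congr rfl fun y _ => by rw [div_eq_inv_mul, mul_smul]
      rw [this, hZ0, smul_zero]
    rw [← hcm]
    exact Finset.centerMass_mem_convexHull _ (fun y hy => le_of_lt (div_pos (hc y (hZX hy)) hσpos))
      (by rw [← Finset.sum_div, ← hσ, div_self (ne_of_gt hσpos)]; norm_num)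
      (fun y hy => Set.mem_image_of_mem q hy)
  -- Caratheodory with positivity
  obtain ⟨ι, hι, z, w, hrange, hindep, hwpos, hw1, hwz⟩ :=
    eq_pos_convex_span_of_mem_convexHull hmem0
  letI : Fintype ι := hι
  have hzne : ∀ i, z i ≠ 0 := by
    intro i
    obtain ⟨y, hy, hqy⟩ := hrange (Set.mem_range_self i)
    rw [← hqy]
    exact hZq y hy
  have hιne : Nonempty ι := by
    rcases isEmpty_or_nonempty ι with h | h
    · exfalso; rw [Finset.univ_eq_empty, Finset.sum_empty] at hw1; norm_num at hw1
    · exact h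
  have hcard2 : 2 ≤ Fintype.card ι := by
    by_contra h
    push_neg at h
    interval_cases hcard : Fintype.card ι
    · exact absurd hcard (@Fintype.card_ne_zero ι _ hιne)
    · obtain ⟨i₀, hi₀⟩ := Fintype.card_eq_one_iff.1 hcard
      have huniv : (Finset.univ : Finset ι) = {i₀} := by
        ext j; simp [hi₀ j]
      rw [huniv, Finset.sum_singleton] at hw1 hwz
      rw [hw1, one_smul] at hwz
      exact hzne i₀ hwz
  -- lift to points of Z
  have hlift : ∀ i, ∃ y, y ∈ Z ∧ q y = z i := by
    intro i
    obtain ⟨y, hy, hqy⟩ := hrange (Set.mem_range_self i)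
    exact ⟨y, hy, hqy⟩
  choose g hgZ hgq using hlift
  have hginj : Function.Injective g := by
    intro i j hij
    apply hindep.injective
    rw [← hgq i, ← hgq j, hij]
  set T : Finset E := Finset.image g Finset.univ with hT
  have hTZ : T ⊆ Z := by
    intro t ht
    obtain ⟨i, _, rfl⟩ := Finset.mem_image.1 ht
    exact hgZ i
  have hTX : T ⊆ X := hTZ.trans hZX
  have hTcard : T.card = Fintype.card ι := by
    rw [hT, Finset.card_image_of_injective _ hginj, Finset.card_univ]
  have hdisj : Disjoint Y T := by
    rw [Finset.disjoint_left]
    intro y hy hyT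
    have := (Finset.mem_filter.1 (hTZ hyT)).2
    exact this (hYU y hy)
  -- the weight function on T
  set d : E → ℝ := fun t => ∑ i ∈ Finset.univ.filter (fun i => g i = t), w i with hd
  have hd_at : ∀ i, d (g i) = w i := by
    intro i
    rw [hd]
    have : Finset.univ.filter (fun j => g j = g i) = {i} := by
      ext j; simp [hginj.eq_iff]
    simp [this]
  have hsumT : ∀ (f : E → ℝ) (v : E → E ⧸ U), True := fun _ _ => trivial
  have hdsum : ∑ t ∈ T, d t = 1 := by
    rw [hT, Finset.sum_image (fun i _ j _ hij => hginj hij)]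
    rw [← hw1]
    exact Finset.sum_congr rfl fun i _ => hd_at i
  have hdq : ∑ t ∈ T, d t • q t = 0 := by
    rw [hT, Finset.sum_image (fun i _ j _ hij => hginj hij)]
    rw [← hwz]
    exact Finset.sum_congr rfl fun i _ => by rw [hd_at i, hgq i]
  have hdpos : ∀ t ∈ T, 0 < d t := by
    intro t ht
    obtain ⟨i, _, rfl⟩ := Finset.mem_image.1 ht
    rw [hd_at i]
    exact hwpos i
  -- the pulled-back vector u lies in U
  set u : E := ∑ t ∈ T, d t • (t - x) with hu
  have huU : u ∈ U := by
    rw [← Submodule.Quotient.mk_eq_zero U]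
    have : Submodule.Quotient.mk u = π u := rfl
    rw [this, hu, map_sum]
    simpa only [map_smul] using hdq
  have hYne : Y.Nonempty := by
    rw [Finset.nonempty_iff_ne_empty]
    intro h
    rw [h, Finset.sum_empty] at hb1
    norm_num at hb1
  have hu' : u ∈ Submodule.span ℝ (↑(Y.image (fun y => y - x)) : Set E) := by
    rw [Finset.coe_image]
    exact huU
  obtain ⟨f, hf⟩ := mem_span_finset.1 hu'
  rw [Finset.sum_image (fun a _ b _ h => by
    have : a - x = b - x := h
    exact sub_left_inj.1 this)] at hf
  set e : E → ℝ := fun y => f (y - x) with he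
  have heu : ∑ y ∈ Y, e y • (y - x) = u := hf.2
  set s' : ℝ := ∑ y ∈ Y, e y with hs'
  set D : E → ℝ := fun y => |e y| + |s'| * b y with hD
  have hDnn : ∀ y ∈ Y, 0 ≤ D y := fun y hy =>
    add_nonneg (abs_nonneg _) (mul_nonneg (abs_nonneg _) (hb y hy).le)
  set δ : ℝ := Y.inf' hYne (fun y => b y / (1 + D y)) with hδ
  have hδpos : 0 < δ := by
    rw [hδ, Finset.lt_inf'_iff]
    intro y hy
    exact div_pos (hb y hy) (by linarith [hDnn y hy])
  have hδD : ∀ y ∈ Y, δ * D y < b y := by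
    intro y hy
    have h1 : δ ≤ b y / (1 + D y) := Finset.inf'_le _ hy
    have h2 : 0 ≤ D y := hDnn y hy
    have hby := hb y hy
    have h3 : δ * D y ≤ (b y / (1 + D y)) * D y := mul_le_mul_of_nonneg_right h1 h2
    have h4 : (b y / (1 + D y)) * D y < b y := by
      rw [div_mul_eq_mul_div, div_lt_iff₀ (by linarith)]
      nlinarith
    exact lt_of_le_of_lt h3 h4
  set b' : E → ℝ := fun y => b y - δ * e y + δ * s' * b y with hb'
  clear_value b' δ D s' e
  have hb'pos : ∀ y ∈ Y, 0 < b' y := by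
    intro y hy
    have h1 : δ * e y ≤ δ * |e y| := mul_le_mul_of_nonneg_left (le_abs_self _) hδpos.le
    have h2a : δ * -|s'| ≤ δ * s' := mul_le_mul_of_nonneg_left (neg_abs_le s') hδpos.le
    have h2b : (δ * -|s'|) * b y ≤ (δ * s') * b y :=
      mul_le_mul_of_nonneg_right h2a (hb y hy).le
    have h2c : (δ * -|s'|) * b y = -(δ * (|s'| * b y)) := by ring
    have h2 : -(δ * (|s'| * b y)) ≤ δ * s' * b y := by rw [← h2c]; exact h2b
    have h3 := hδD y hy
    simp only [hD] at h3
    rw [mul_add] at h3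
    simp only [hb']
    have hgoal : δ * s' * b y = (δ * s') * b y := by ring
    linarith
  have hb'sum : ∑ y ∈ Y, b' y = 1 := by
    have hterm : ∀ y ∈ Y, b' y = b y - δ * e y + δ * s' * b y := fun y _ => by simp only [hb']
    rw [Finset.sum_congr rfl hterm, Finset.sum_add_distrib, Finset.sum_sub_distrib,
      ← Finset.mul_sum]
    have : ∑ y ∈ Y, δ * s' * b y = (δ * s') * ∑ y ∈ Y, b y := by
      rw [Finset.mul_sum]
    rw [this, hb1, ← hs']
    ring
  have hb'comb : ∑ y ∈ Y, b' y • (y - x) = -(δ • u) := by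
    have hterm : ∀ y ∈ Y, b' y • (y - x)
        = b y • (y - x) - δ • (e y • (y - x)) + (δ * s') • (b y • (y - x)) := by
      intro y _
      simp only [hb']
      module
    rw [Finset.sum_congr rfl hterm, Finset.sum_add_distrib, Finset.sum_sub_distrib,
      ← Finset.smul_sum, ← Finset.smul_sum, hb0, heu]
    simp
  -- assemble the new convex combination
  set a : E → ℝ := fun y =>
    ((if y ∈ Y then b' y else 0) + (if y ∈ T then δ * d y else 0)) / (1 + δ) with ha
  have h1δ : (0:ℝ) < 1 + δ := by linarith
  have haY : ∀ y ∈ Y, a y = b' y / (1 + δ) := by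
    intro y hy
    have hyT : y ∉ T := Finset.disjoint_left.1 hdisj hy
    rw [ha]
    simp [hy, hyT]
  have haT : ∀ t ∈ T, a t = (δ * d t) / (1 + δ) := by
    intro t ht
    have htY : t ∉ Y := fun h => Finset.disjoint_left.1 hdisj h ht
    rw [ha]
    simp [ht, htY]
  have hapos : ∀ y ∈ Y ∪ T, 0 < a y := by
    intro y hy
    rcases Finset.mem_union.1 hy with h | h
    · rw [haY y h]; exact div_pos (hb'pos y h) h1δ
    · rw [haT y h]; exact div_pos (mul_pos hδpos (hdpos y h)) h1δ
  have hasum : ∑ y ∈ Y ∪ T, a y = 1 := by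
    rw [Finset.sum_union hdisj]
    rw [Finset.sum_congr rfl haY, Finset.sum_congr rfl haT]
    rw [← Finset.sum_div, ← Finset.sum_div, hb'sum, ← Finset.mul_sum, hdsum]
    field_simp
  have hacomb : ∑ y ∈ Y ∪ T, a y • (y - x) = 0 := by
    rw [Finset.sum_union hdisj]
    have hY' : ∑ y ∈ Y, a y • (y - x) = (1 + δ)⁻¹ • ∑ y ∈ Y, b' y • (y - x) := by
      rw [Finset.smul_sum]
      refine Finset.sum_congr rfl fun y hy => ?_
      rw [haY y hy, div_eq_inv_mul, mul_smul]
    have hT' : ∑ t ∈ T, a t • (t - x) = (1 + δ)⁻¹ • (δ • ∑ t ∈ T, d t • (t - x)) := by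
      rw [Finset.smul_sum, Finset.smul_sum]
      refine Finset.sum_congr rfl fun t ht => ?_
      rw [haT t ht, div_eq_inv_mul, mul_smul, mul_smul]
    rw [hY', hT', hb'comb, ← hu]
    rw [← smul_add]
    simp
  -- the dimension estimate
  set U' : Submodule ℝ E :=
    Submodule.span ℝ ((fun y => y - x) '' ((Y ∪ T : Finset E) : Set E)) with hU'
  have hUle : U ≤ U' := by
    rw [hU, hU']
    apply Submodule.span_mono
    apply Set.image_mono
    rw [Finset.coe_union]
    exact Set.subset_union_left
  set f' : ↥U' →ₗ[ℝ] E ⧸ U := π ∘ₗ U'.subtype with hf'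
  have hkerrank : finrank ℝ (LinearMap.ker f') = finrank ℝ U := by
    have hker : LinearMap.ker f' = Submodule.comap U'.subtype U := by
      rw [hf', LinearMap.ker_comp, hπ, Submodule.ker_mkQ]
    have h1 := Submodule.finrank_map_subtype_eq U' (Submodule.comap U'.subtype U)
    rw [Submodule.map_comap_subtype] at h1
    have h2 : U' ⊓ U = U := inf_of_le_right hUle
    rw [h2] at h1
    rw [hker, ← h1]
  have hrangef' : LinearMap.range f' = U'.map π := by
    rw [hf', LinearMap.range_comp, Submodule.range_subtype]
  have hspan_le : Submodule.span ℝ (Set.range z) ≤ U'.map π := by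
    rw [Submodule.span_le]
    rintro - ⟨i, rfl⟩
    have hmemT : g i ∈ ((Y ∪ T : Finset E) : Set E) := by
      rw [Finset.coe_union]
      exact Set.mem_union_right _ (Finset.mem_image_of_mem g (Finset.mem_univ i))
    have hπz : π (g i - x) = z i := by rw [← hgq i]
    exact ⟨g i - x, Submodule.subset_span ⟨g i, hmemT, rfl⟩, hπz⟩
  have hzrank : Fintype.card ι - 1 ≤ finrank ℝ (Submodule.span ℝ (Set.range z)) := by
    obtain ⟨i₀⟩ := hιne
    have hli := (affineIndependent_iff_linearIndependent_vsub ℝ z i₀).1 hindep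
    set S := Submodule.span ℝ (Set.range z) with hS
    have hmem : ∀ j : {k : ι // k ≠ i₀}, z (j : ι) - z i₀ ∈ S := fun j =>
      sub_mem (Submodule.subset_span (Set.mem_range_self _))
        (Submodule.subset_span (Set.mem_range_self _))
    set zb : {k : ι // k ≠ i₀} → S := fun j => ⟨z (j : ι) - z i₀, hmem j⟩ with hzb
    have hlib : LinearIndependent ℝ zb := by
      apply LinearIndependent.of_comp S.subtype
      have : (S.subtype ∘ zb) = fun j : {k : ι // k ≠ i₀} => z (j : ι) -ᵥ z i₀ := by
        funext j
        simp [hzb, vsub_eq_sub]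
      rw [this]
      exact hli
    have hcount := hlib.fintype_card_le_finrank
    have hcc : Fintype.card {k : ι // k ≠ i₀} = Fintype.card ι - 1 := by
      have h1 : Fintype.card {k : ι // k = i₀} = 1 := Fintype.card_subtype_eq i₀
      have h2 := Fintype.card_subtype_compl (fun k : ι => k = i₀)
      rw [h1] at h2
      exact h2
    rw [hcc] at hcount
    exact hcount
  have hrn := LinearMap.finrank_range_add_finrank_ker f'
  have hmono : finrank ℝ (Submodule.span ℝ (Set.range z)) ≤ finrank ℝ (U'.map π) :=
    Submodule.finrank_mono hspan_le
  have hdim : finrank ℝ U + (T.card - 1) ≤ finrank ℝ U' := by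
    rw [hrangef', hkerrank] at hrn
    rw [hTcard]
    omega
  exact ⟨T, hTX, hdisj, by rw [hTcard]; exact hcard2, ⟨a, hapos, hasum, hacomb⟩, hdim⟩

lemma grow_lemma (X : Finset E) (x : E)
    (c : E → ℝ) (hc : ∀ y ∈ X, 0 < c y) (hc1 : ∑ y ∈ X, c y = 1)
    (hc0 : ∑ y ∈ X, c y • (y - x) = 0) :
    ∀ (j : ℕ) (Y : Finset E), Y ⊆ X →
      (∃ b : E → ℝ, (∀ y ∈ Y, 0 < b y) ∧ ∑ y ∈ Y, b y = 1 ∧ ∑ y ∈ Y, b y • (y - x) = 0) →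
      finrank ℝ (Submodule.span ℝ ((fun y => y - x) '' (X : Set E)))
        ≤ finrank ℝ (Submodule.span ℝ ((fun y => y - x) '' (Y : Set E))) + j →
      ∃ Y' : Finset E, Y' ⊆ X ∧
        (∃ a : E → ℝ, (∀ y ∈ Y', 0 < a y) ∧ ∑ y ∈ Y', a y = 1 ∧
          ∑ y ∈ Y', a y • (y - x) = 0) ∧
        Submodule.span ℝ ((fun y => y - x) '' (Y' : Set E))
          = Submodule.span ℝ ((fun y => y - x) '' (X : Set E)) ∧
        Y'.card + 2 * finrank ℝ (Submodule.span ℝ ((fun y => y - x) '' (Y : Set E)))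
          ≤ Y.card + 2 * finrank ℝ (Submodule.span ℝ ((fun y => y - x) '' (X : Set E))) := by
  intro j
  induction j with
  | zero =>
    intro Y hYX hcombo hj
    have hUle : Submodule.span ℝ ((fun y => y - x) '' (Y : Set E))
        ≤ Submodule.span ℝ ((fun y => y - x) '' (X : Set E)) :=
      Submodule.span_mono (Set.image_mono (by exact_mod_cast hYX))
    by_cases h : Submodule.span ℝ ((fun y => y - x) '' (Y : Set E))
        = Submodule.span ℝ ((fun y => y - x) '' (X : Set E))
    · exact ⟨Y, hYX, hcombo, h, by
        have := Submodule.finrank_mono hUle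
        omega⟩
    · exfalso
      have := Submodule.finrank_lt_finrank_of_lt (lt_of_le_of_ne hUle h)
      omega
  | succ j ih =>
    intro Y hYX hcombo hj
    have hUle : Submodule.span ℝ ((fun y => y - x) '' (Y : Set E))
        ≤ Submodule.span ℝ ((fun y => y - x) '' (X : Set E)) :=
      Submodule.span_mono (Set.image_mono (by exact_mod_cast hYX))
    by_cases h : Submodule.span ℝ ((fun y => y - x) '' (Y : Set E))
        = Submodule.span ℝ ((fun y => y - x) '' (X : Set E))
    · exact ⟨Y, hYX, hcombo, h, by
        have := Submodule.finrank_mono hUle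
        omega⟩
    · obtain ⟨b, hb, hb1, hb0⟩ := hcombo
      obtain ⟨T, hTX, hdisj, hT2, hcombo', hdim⟩ :=
        step_lemma X Y x hYX c hc hc1 hc0 b hb hb1 hb0 h
      have hcardU : (Y ∪ T).card = Y.card + T.card := Finset.card_union_of_disjoint hdisj
      have hUle' : Submodule.span ℝ ((fun y => y - x) '' ((Y ∪ T : Finset E) : Set E))
          ≤ Submodule.span ℝ ((fun y => y - x) '' (X : Set E)) :=
        Submodule.span_mono (Set.image_mono (by
          exact_mod_cast Finset.union_subset hYX hTX))
      have hUle'' := Submodule.finrank_mono hUle'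
      obtain ⟨Y', hY'X, hcombo'', hspan, hcard⟩ :=
        ih (Y ∪ T) (Finset.union_subset hYX hTX) hcombo' (by omega)
      exact ⟨Y', hY'X, hcombo'', hspan, by omega⟩

/-- `SimplexIn n X x m` means there is an `m`-dimensional simplex with vertices in `X`
(i.e. the convex hull of `m + 1` affinely independent points of `X`) having `x` in its
relative interior. -/
def SimplexIn (n : ℕ) (X : Finset (Fin n → ℝ)) (x : Fin n → ℝ) (m : ℕ) : Prop :=
  ∃ W ⊆ X, W.card = m + 1 ∧
    AffineIndependent ℝ (fun p : (W : Set (Fin n → ℝ)) => (p : Fin n → ℝ)) ∧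
    x ∈ intrinsicInterior ℝ (convexHull ℝ (W : Set (Fin n → ℝ)))

/-- **Bonnice–Reay type refinement of Steinitz' theorem.** If `conv(X)` is `k`-dimensional
with `x` in its relative interior, and `k'` is the largest dimension of a simplex with
vertices in `X` having `x` in its relative interior, then some `Y ⊆ X` with
`|Y| ≤ 2k - k' + 1` has `conv(Y)` `k`-dimensional with `x` in its relative interior. -/
theorem steinitz_simplex_refinement (n k k' : ℕ) (X : Finset (Fin n → ℝ)) (x : Fin n → ℝ)
    (hdim : Module.finrank ℝ (vectorSpan ℝ (X : Set (Fin n → ℝ))) = k)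
    (hx : x ∈ intrinsicInterior ℝ (convexHull ℝ (X : Set (Fin n → ℝ))))
    (hk' : SimplexIn n X x k') (hk'max : ∀ m, SimplexIn n X x m → m ≤ k') :
    ∃ Y ⊆ X, Y.card ≤ 2 * k - k' + 1 ∧
      Module.finrank ℝ (vectorSpan ℝ (Y : Set (Fin n → ℝ))) = k ∧
      x ∈ intrinsicInterior ℝ (convexHull ℝ (Y : Set (Fin n → ℝ))) := by
  classical
  obtain ⟨W, hWX, hWcard, hWindep, hWx⟩ := hk'
  obtain ⟨c, hcpos, hc1, hcx⟩ := pos_combo_of_mem_intrinsicInterior X x hx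
  have hzero : ∀ (S : Finset (Fin n → ℝ)) (a : (Fin n → ℝ) → ℝ), (∑ y ∈ S, a y = 1) →
      (∑ y ∈ S, a y • y = x) → ∑ y ∈ S, a y • (y - x) = 0 := by
    intro S a ha1 hax
    have : ∑ y ∈ S, a y • (y - x) = (∑ y ∈ S, a y • y) - (∑ y ∈ S, a y) • x := by
      rw [Finset.sum_smul, ← Finset.sum_sub_distrib]
      exact Finset.sum_congr rfl fun y _ => smul_sub _ _ _
    rw [this, hax, ha1, one_smul, sub_self]
  have hc0 := hzero X c hc1 hcx
  obtain ⟨b, hbpos, hb1, hbx⟩ := pos_combo_of_mem_intrinsicInterior W x hWx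
  have hb0 := hzero W b hb1 hbx
  have hxX : x ∈ affineSpan ℝ (X : Set (Fin n → ℝ)) :=
    memAffineSpan_of_mem_convexHull (intrinsicInterior_subset hx)
  have hVX : Submodule.span ℝ ((fun y => y - x) '' (X : Set (Fin n → ℝ)))
      = vectorSpan ℝ (X : Set (Fin n → ℝ)) := spanS _ x hxX
  have hfV : finrank ℝ (Submodule.span ℝ ((fun y => y - x) '' (X : Set (Fin n → ℝ)))) = k := by
    rw [hVX]; exact hdim
  have hxW : x ∈ affineSpan ℝ (W : Set (Fin n → ℝ)) :=
    memAffineSpan_of_mem_convexHull (intrinsicInterior_subset hWx)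
  have hfW : finrank ℝ (Submodule.span ℝ ((fun y => y - x) '' (W : Set (Fin n → ℝ)))) = k' := by
    rw [spanS _ x hxW]
    have hcardW : Fintype.card ((W : Set (Fin n → ℝ))) = k' + 1 := by
      simp only [Finset.coe_sort_coe, Fintype.card_coe, hWcard]
    have h := AffineIndependent.finrank_vectorSpan hWindep (n := k') hcardW
    rw [Subtype.range_coe] at h
    exact h
  have hk'k : k' ≤ k := by
    have hle : Submodule.span ℝ ((fun y => y - x) '' (W : Set (Fin n → ℝ)))
        ≤ Submodule.span ℝ ((fun y => y - x) '' (X : Set (Fin n → ℝ))) :=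
      Submodule.span_mono (Set.image_mono (by exact_mod_cast hWX))
    have := Submodule.finrank_mono hle
    omega
  obtain ⟨Y, hYX, ⟨a, hapos, ha1, ha0⟩, hspanY, hcard⟩ :=
    grow_lemma X x c hcpos hc1 hc0 (k - k') W hWX ⟨b, hbpos, hb1, hb0⟩ (by omega)
  have hax : ∑ y ∈ Y, a y • y = x := by
    have h := hzero Y a ha1
    have : ∑ y ∈ Y, a y • y = ∑ y ∈ Y, a y • (y - x) + (∑ y ∈ Y, a y) • x := by
      rw [Finset.sum_smul, ← Finset.sum_add_distrib]
      refine Finset.sum_congr rfl fun y _ => ?_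
      rw [smul_sub]
      abel
    rw [this, ha0, ha1, one_smul, zero_add]
  have hxint := mem_intrinsicInterior_of_pos_combo Y x a hapos ha1 hax
  have hxY : x ∈ affineSpan ℝ (Y : Set (Fin n → ℝ)) :=
    memAffineSpan_of_mem_convexHull (intrinsicInterior_subset hxint)
  refine ⟨Y, hYX, ?_, ?_, hxint⟩
  · rw [hfW, hfV] at hcard
    omega
  · rw [← spanS _ x hxY, hspanY, hfV]

-- #print axioms steinitz_simplex_refinement
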